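/- (Lemma on the auxiliary functions A_k.) For every integer k with 0 ≤ k ≤ n−1 and every u ∈ U, the function A_k defined in the context is differentiable and satisfies A_k'(u) = −(k+1)·a·((n−1)/(n−2))·|F(u)|^{1/(n−2)}·F'(u)·(b_{k+1} + A_{k+1}(u)), where A_n := 0. -/

import Mathlib

/-- The auxiliary functions `A_k`; note that `A_n = 0` (empty sum). -/
noncomputable def Afun (n : ℕ) (ν a : ℝ) (b : ℕ → ℝ) (F : ℝ → ℝ) (k : ℕ) (u : ℝ) : ℝ :=
  ∑ i ∈ Finset.Icc 1 (n - k),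
    (-ν) ^ i * ((k + i).choose i : ℝ) * a ^ i * b (k + i)
      * |F u| ^ (((i : ℝ) * ((n : ℝ) - 1)) / ((n : ℝ) - 2))

lemma sumIccOne {M : Type*} [AddCommMonoid M] (m : ℕ) (f : ℕ → M) :
    ∑ i ∈ Finset.Icc 1 m, f i = ∑ j ∈ Finset.range m, f (1 + j) := by
  have h : Finset.Icc 1 m = (Finset.range m).map (addLeftEmbedding 1) := by
    rw [Finset.range_eq_Ico, Finset.map_add_left_Ico,
      show 1 + 0 = 1 from rfl, show 1 + m = m + 1 from Nat.add_comm 1 m, Finset.Ico_add_one_right_eq_Icc]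
  rw [h, Finset.sum_map]
  rfl

theorem stmt12 (n : ℕ) (hn : 4 ≤ n)
    (U : Set ℝ) (hU : IsOpen U) (hUc : U.OrdConnected)
    (F : ℝ → ℝ) (hF : ∀ u ∈ U, DifferentiableAt ℝ F u)
    (hFne : ∀ u ∈ U, F u ≠ 0)
    (ν : ℝ) (hν : ν = 1 ∨ ν = -1) (hνF : ∀ u ∈ U, |F u| = ν * F u)
    (a : ℝ) (b : ℕ → ℝ) :
    ∀ k : ℕ, k ≤ n - 1 → ∀ u ∈ U,
      HasDerivAt (Afun n ν a b F k)
        (-((k : ℝ) + 1) * a * (((n : ℝ) - 1) / ((n : ℝ) - 2))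
          * |F u| ^ ((1 : ℝ) / ((n : ℝ) - 2)) * deriv F u
          * (b (k + 1) + Afun n ν a b F (k + 1) u)) u := by
  intro k hk u hu
  have hn2 : ((n : ℝ) - 2) ≠ 0 := by
    have h4 : (4 : ℝ) ≤ (n : ℝ) := by exact_mod_cast hn
    nlinarith
  have hx : 0 < |F u| := abs_pos.mpr (hFne u hu)
  have hF' : HasDerivAt F (deriv F u) u := (hF u hu).hasDerivAt
  have habs : HasDerivAt (fun v => |F v|) (ν * deriv F u) u := by
    have h1 : HasDerivAt (fun v => ν * F v) (ν * deriv F u) u := hF'.const_mul ν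
    apply h1.congr_of_eventuallyEq
    filter_upwards [hU.mem_nhds hu] with v hv
    exact hνF v hv
  have hterm : ∀ i : ℕ, HasDerivAt
      (fun v => (-ν) ^ i * ((k + i).choose i : ℝ) * a ^ i * b (k + i)
        * |F v| ^ (((i : ℝ) * ((n : ℝ) - 1)) / ((n : ℝ) - 2)))
      ((-ν) ^ i * ((k + i).choose i : ℝ) * a ^ i * b (k + i)
        * ((ν * deriv F u) * (((i : ℝ) * ((n : ℝ) - 1)) / ((n : ℝ) - 2))
          * |F u| ^ ((((i : ℝ) * ((n : ℝ) - 1)) / ((n : ℝ) - 2)) - 1))) u := by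
    intro i
    exact (habs.rpow_const (Or.inl hx.ne')).const_mul _
  have hsum := HasDerivAt.fun_sum (fun i (_ : i ∈ Finset.Icc 1 (n - k)) => hterm i)
  obtain ⟨M, hM⟩ : ∃ M, n - k = M + 1 := ⟨n - k - 1, by omega⟩
  have hM1 : n - (k + 1) = M := by omega
  have hA : Afun n ν a b F (k + 1) u
      = ∑ i ∈ Finset.Icc 1 M, (-ν) ^ i * ((k + 1 + i).choose i : ℝ) * a ^ i * b (k + 1 + i)
          * |F u| ^ (((i : ℝ) * ((n : ℝ) - 1)) / ((n : ℝ) - 2)) := by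
    rw [Afun, hM1]
  have key : (∑ i ∈ Finset.Icc 1 (n - k),
      (-ν) ^ i * ((k + i).choose i : ℝ) * a ^ i * b (k + i)
        * ((ν * deriv F u) * (((i : ℝ) * ((n : ℝ) - 1)) / ((n : ℝ) - 2))
          * |F u| ^ ((((i : ℝ) * ((n : ℝ) - 1)) / ((n : ℝ) - 2)) - 1)))
      = -((k : ℝ) + 1) * a * (((n : ℝ) - 1) / ((n : ℝ) - 2))
          * |F u| ^ ((1 : ℝ) / ((n : ℝ) - 2)) * deriv F u
          * (b (k + 1) + ∑ i ∈ Finset.Icc 1 M,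
              (-ν) ^ i * ((k + 1 + i).choose i : ℝ) * a ^ i * b (k + 1 + i)
                * |F u| ^ (((i : ℝ) * ((n : ℝ) - 1)) / ((n : ℝ) - 2))) := by
    set x := |F u| with hxdef
    set F' := deriv F u with hF'def
    set C0 : ℝ := -((k : ℝ) + 1) * a * (((n : ℝ) - 1) / ((n : ℝ) - 2))
          * x ^ ((1 : ℝ) / ((n : ℝ) - 2)) * F' with hC0
    have hterm_eq : ∀ j : ℕ,
        C0 * ((-ν) ^ j * ((k + 1 + j).choose j : ℝ) * a ^ j * b (k + 1 + j)
          * x ^ (((j : ℝ) * ((n : ℝ) - 1)) / ((n : ℝ) - 2)))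
        = (-ν) ^ (1 + j) * ((k + (1 + j)).choose (1 + j) : ℝ) * a ^ (1 + j) * b (k + (1 + j))
          * ((ν * F') * ((((1 + j : ℕ) : ℝ) * ((n : ℝ) - 1)) / ((n : ℝ) - 2))
            * x ^ (((((1 + j : ℕ) : ℝ) * ((n : ℝ) - 1)) / ((n : ℝ) - 2)) - 1)) := by
      intro j
      have hj1 : ((j : ℝ) + 1) ≠ 0 := by positivity
      have hc : (((k + 1 + j).choose (j + 1) : ℝ))
          = (((k + 1 + j).choose j : ℝ)) * ((k : ℝ) + 1) / ((j : ℝ) + 1) := by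
        rw [eq_div_iff hj1]
        have h := Nat.choose_succ_right_eq (k + 1 + j) j
        have h2 : k + 1 + j - j = k + 1 := by omega
        rw [h2] at h
        exact_mod_cast congrArg (fun z : ℕ => (z : ℝ)) h
      have hxp : x ^ (((((1 + j : ℕ) : ℝ)) * ((n : ℝ) - 1)) / ((n : ℝ) - 2) - 1)
          = x ^ ((1 : ℝ) / ((n : ℝ) - 2)) * x ^ (((j : ℝ) * ((n : ℝ) - 1)) / ((n : ℝ) - 2)) := by
        rw [← Real.rpow_add hx]
        congr 1
        push_cast
        field_simp
        ring
      have hkj : k + (1 + j) = k + 1 + j := by omega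
      have hjj : 1 + j = j + 1 := by omega
      rw [hxp, hkj, hjj, hc, hC0]
      push_cast
      rcases hν with h | h <;> subst h <;>
        (try simp only [neg_neg, one_pow]) <;> field_simp <;> ring
    rw [hM, sumIccOne (M + 1), sumIccOne M, Finset.sum_range_succ', mul_add, Finset.mul_sum]
    have h1 : ∀ j ∈ Finset.range M,
        (-ν) ^ (1 + (j + 1)) * ((k + (1 + (j + 1))).choose (1 + (j + 1)) : ℝ)
            * a ^ (1 + (j + 1)) * b (k + (1 + (j + 1)))
          * ((ν * F') * ((((1 + (j + 1) : ℕ) : ℝ) * ((n : ℝ) - 1)) / ((n : ℝ) - 2))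
            * x ^ (((((1 + (j + 1) : ℕ) : ℝ) * ((n : ℝ) - 1)) / ((n : ℝ) - 2)) - 1))
        = C0 * ((-ν) ^ (1 + j) * ((k + 1 + (1 + j)).choose (1 + j) : ℝ) * a ^ (1 + j)
            * b (k + 1 + (1 + j))
            * x ^ ((((1 + j : ℕ) : ℝ) * ((n : ℝ) - 1)) / ((n : ℝ) - 2))) := by
      intro j _
      have h := hterm_eq (1 + j)
      rw [show (1 : ℕ) + (j + 1) = 1 + (1 + j) from by omega]
      exact h.symm
    have h0 : (-ν) ^ (1 + 0) * ((k + (1 + 0)).choose (1 + 0) : ℝ) * a ^ (1 + 0) * b (k + (1 + 0))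
          * ((ν * F') * ((((1 + 0 : ℕ) : ℝ) * ((n : ℝ) - 1)) / ((n : ℝ) - 2))
            * x ^ (((((1 + 0 : ℕ) : ℝ) * ((n : ℝ) - 1)) / ((n : ℝ) - 2)) - 1))
        = C0 * b (k + 1) := by
      rw [← hterm_eq 0]
      norm_num
    rw [Finset.sum_congr rfl h1, h0]
    ring
  rw [show (Afun n ν a b F k) = (fun v => ∑ i ∈ Finset.Icc 1 (n - k),
      (-ν) ^ i * ((k + i).choose i : ℝ) * a ^ i * b (k + i)
        * |F v| ^ (((i : ℝ) * ((n : ℝ) - 1)) / ((n : ℝ) - 2))) from rfl, hA]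
  exact key ▸ hsum
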